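/- arXiv:2208.02431 — 2 statements merged into one kernel-verified Lean document; each statement's English description precedes it below -/
import Mathlib

section
/- Let k_s ≥ 1 be a natural number, let A ⊆ B ⊆ C be finite sets of users (A playing the role of the uncovered users D'_{sd} of the smaller disk D_{sd} of server s, B the uncovered users D'_{su} of the larger disk, and C the user set of D_{sd}), with |A| = k_s. Let θ : users → ℝ, β_{su} ≥ 0, β_{sd} ≥ 0, and γ_{·,sd} : C → ℝ with γ_{h,sd} ≥ 0 for all h ∈ C and γ_{h,sd} = 0 for h ∈ C \ A. Suppose θ_h = β_{su} for every h ∈ B, that the larger disk's constraint is tight, k_s · β_{su} = p_{su}, that the smaller disk has strictly smaller power, p_{sd} < p_{su}, and that dual feasibility of the user constraints holds on A: θ_h ≤ β_{sd} + γ_{h,sd} for every h ∈ A. Then k_s · β_{sd} + ∑_{h ∈ C} γ_{h,sd} ≥ p_{su} > p_{sd}; i.e., the dual disk constraint k_s · β_{sd} + ∑_{h ∈ C} γ_{h,sd} ≤ p_{sd} is violated. (This is the contradiction showing that in algorithm PD a tight disk D_{su} always satisfies |D'_{su}| ≤ k_s, so the selected disk has enough capacity to cover all its uncovered users.) -/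
/-- the contradiction in the proof of Lemma 1 of the paper. If the tight
larger disk has `θ h = β_su` on its uncovered users `B`, `k_s · β_su = p_su`,
`p_sd < p_su`, and dual feasibility of the user constraints holds on the uncovered users
`A` (with `|A| = k_s`) of the smaller disk, then the smaller disk's dual constraint
`k_s · β_sd + ∑_{h ∈ C} γ_{h,sd} ≤ p_sd` is violated. -/
theorem cmpc_tight_disk_capacity_contradiction
    (User : Type) [DecidableEq User]
    (A B C : Finset User) (hAB : A ⊆ B) (hBC : B ⊆ C)
    (ks : ℕ) (hks : 1 ≤ ks) (hA : A.card = ks)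
    (θ : User → ℝ) (βsu βsd : ℝ) (hβsu : 0 ≤ βsu) (hβsd : 0 ≤ βsd)
    (γsd : User → ℝ) (hγ : ∀ h ∈ C, 0 ≤ γsd h) (hγ0 : ∀ h ∈ C \ A, γsd h = 0)
    (psu psd : ℝ)
    (hθB : ∀ h ∈ B, θ h = βsu)
    (htight : (ks : ℝ) * βsu = psu)
    (hps : psd < psu)
    (hfeas : ∀ h ∈ A, θ h ≤ βsd + γsd h) :
    psu ≤ (ks : ℝ) * βsd + ∑ h ∈ C, γsd h ∧
    psd < (ks : ℝ) * βsd + ∑ h ∈ C, γsd h := by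
  have hsumC : ∑ h ∈ C, γsd h = ∑ h ∈ A, γsd h := by
    rw [← Finset.sum_subset (hAB.trans hBC)]
    intro x hx hnx
    exact hγ0 x (Finset.mem_sdiff.mpr ⟨hx, hnx⟩)
  have key : psu ≤ (ks : ℝ) * βsd + ∑ h ∈ C, γsd h := by
    calc psu = (ks : ℝ) * βsu := htight.symm
    _ = ∑ h ∈ A, θ h := by
        rw [Finset.sum_congr rfl (fun h hh => hθB h (hAB hh)), Finset.sum_const, hA,
          nsmul_eq_mul]
    _ ≤ ∑ h ∈ A, (βsd + γsd h) := Finset.sum_le_sum hfeas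
    _ = (ks : ℝ) * βsd + ∑ h ∈ A, γsd h := by
        rw [Finset.sum_add_distrib, Finset.sum_const, hA, nsmul_eq_mul]
    _ = (ks : ℝ) * βsd + ∑ h ∈ C, γsd h := by rw [hsumC]
  exact ⟨key, lt_of_lt_of_le hps key⟩
end

section
/- Consider the CMPC instance with m servers S, users U, capacities k : S → ℕ, candidate disks 𝒟 indexed by server–user pairs, powers p_{ij} ≥ 0, where D_{ij} also denotes the set of users contained in disk D_{ij} and 𝒟_i denotes the disks centered at server i. Let (θ, β, γ) with θ : U → ℝ≥0, β : 𝒟 → ℝ≥0, γ : U × 𝒟 → ℝ≥0 be feasible for the dual LP with μ ≡ 0, i.e., θ_h ≤ β_{ij} + γ_{h,ij} for every user h ∈ D_{ij} and k_i·β_{ij} + ∑_{h ∈ D_{ij}} γ_{h,ij} ≤ p_{ij} for every disk D_{ij}. Let 𝒟̂ ⊆ 𝒟 contain at most one disk per server, and suppose every chosen disk's power is exactly charged to a set of the users it contains: for each D_{ij} ∈ 𝒟̂ there is δ(D_{ij}) ⊆ D_{ij} with p_{ij} = ∑_{h ∈ δ(D_{ij})} θ_h. Then for every integral primal feasible solution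 (x, y) of the CMPC integer program (x_{ij}, y_{h,ij} ∈ {0,1} satisfying: every user h is covered, ∑_{D_{ij}: h ∈ D_{ij}} y_{h,ij} ≥ 1; capacity, k_i·x_{ij} ≥ ∑_{h ∈ D_{ij}} y_{h,ij}; coverage only by selected disks, x_{ij} ≥ y_{h,ij} for h ∈ D_{ij}; and at most one disk per server, ∑_{D_{ij} ∈ 𝒟_i} x_{ij} ≤ 1), the total power of the chosen disks satisfies ∑_{D_{ij} ∈ 𝒟̂} p_{ij} ≤ m · ∑_{D_{ij} ∈ 𝒟} p_{ij}·x_{ij}. In particular, ∑_{D_{ij} ∈ 𝒟̂} p_{ij} ≤ m · OPT, where OPT is the minimum power of an integral feasible cover. -/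
/-- Theorem 1 of the paper, approximation guarantee: if `(θ, β, γ)` is dual
feasible with `μ ≡ 0`, the algorithm's output `𝒟̂` picks at most one disk per server and
the power of each chosen disk is exactly charged to a subset `δ` of its users, then for
every integral primal feasible solution `(x, y)` of the CMPC integer program, the total
power of the chosen disks is at most `m` times the power of `(x, y)`; in particular it is
at most `m · OPT`, where `m` is the number of servers. -/
theorem cmpc_primal_dual_m_approximation
    (S U D : Type) [Fintype S] [Fintype U] [Fintype D] [DecidableEq S] [DecidableEq U]
    (center : D → S) (p : D → ℝ) (hp : ∀ dd : D, 0 ≤ p dd)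
    (users : D → Finset U) (k : S → ℕ)
    -- dual feasibility with μ ≡ 0
    (θ : U → ℝ) (β : D → ℝ) (γ : U → D → ℝ)
    (hθ : ∀ h : U, 0 ≤ θ h) (hβ : ∀ dd : D, 0 ≤ β dd)
    (hγ : ∀ (h : U) (dd : D), 0 ≤ γ h dd)
    (hdual1 : ∀ dd : D, ∀ h ∈ users dd, θ h ≤ β dd + γ h dd)
    (hdual2 : ∀ dd : D, (k (center dd) : ℝ) * β dd + ∑ h ∈ users dd, γ h dd ≤ p dd)
    -- the chosen disks: at most one per server, each exactly charged to users it contains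
    (𝒟hat : Finset D)
    (hone : ∀ i : S, (𝒟hat.filter (fun dd => center dd = i)).card ≤ 1)
    (δ : D → Finset U)
    (hδsub : ∀ dd ∈ 𝒟hat, δ dd ⊆ users dd)
    (hcharge : ∀ dd ∈ 𝒟hat, p dd = ∑ h ∈ δ dd, θ h)
    -- integral primal feasible solution (x, y)
    (x : D → ℝ) (y : U → D → ℝ)
    (hxint : ∀ dd : D, x dd = 0 ∨ x dd = 1)
    (hyint : ∀ (h : U) (dd : D), y h dd = 0 ∨ y h dd = 1)
    (h1 : ∀ h : U, 1 ≤ ∑ dd ∈ Finset.univ.filter (fun dd => h ∈ users dd), y h dd)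
    (h2 : ∀ dd : D, ∑ h ∈ users dd, y h dd ≤ (k (center dd) : ℝ) * x dd)
    (h3 : ∀ dd : D, ∀ h ∈ users dd, y h dd ≤ x dd)
    (h4 : ∀ i : S, ∑ dd ∈ Finset.univ.filter (fun dd => center dd = i), x dd ≤ 1) :
    ∑ dd ∈ 𝒟hat, p dd ≤ (Fintype.card S : ℝ) * ∑ dd : D, p dd * x dd := by

  classical
  have hx0 : ∀ dd : D, 0 ≤ x dd := fun dd => by rcases hxint dd with h | h <;> simp [h]
  have hy0 : ∀ (h : U) (dd : D), 0 ≤ y h dd := fun h dd => by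
    rcases hyint h dd with h' | h' <;> simp [h']
  set T : ℝ := ∑ h : U, θ h with hT
  have hT0 : 0 ≤ T := Finset.sum_nonneg fun h _ => hθ h
  -- weak duality
  have hwd : T ≤ ∑ dd : D, p dd * x dd := by
    have step1 : T ≤ ∑ h : U, ∑ dd ∈ Finset.univ.filter (fun dd => h ∈ users dd),
        y h dd * θ h := by
      apply Finset.sum_le_sum
      intro h _
      calc θ h = 1 * θ h := (one_mul _).symm
        _ ≤ (∑ dd ∈ Finset.univ.filter (fun dd => h ∈ users dd), y h dd) * θ h :=
            mul_le_mul_of_nonneg_right (h1 h) (hθ h)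
        _ = ∑ dd ∈ Finset.univ.filter (fun dd => h ∈ users dd), y h dd * θ h :=
            Finset.sum_mul ..
    have step2 : ∑ h : U, ∑ dd ∈ Finset.univ.filter (fun dd => h ∈ users dd),
        y h dd * θ h ≤ ∑ h : U, ∑ dd ∈ Finset.univ.filter (fun dd => h ∈ users dd),
        y h dd * (β dd + γ h dd) := by
      apply Finset.sum_le_sum; intro h _
      apply Finset.sum_le_sum; intro dd hdd
      simp only [Finset.mem_filter] at hdd
      exact mul_le_mul_of_nonneg_left (hdual1 dd h hdd.2) (hy0 h dd)
    have swap : ∑ h : U, ∑ dd ∈ Finset.univ.filter (fun dd => h ∈ users dd),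
        y h dd * (β dd + γ h dd)
        = ∑ dd : D, ∑ h ∈ users dd, y h dd * (β dd + γ h dd) := by
      simp only [Finset.sum_filter]
      rw [Finset.sum_comm]
      apply Finset.sum_congr rfl
      intro dd _
      rw [← Finset.sum_filter]
      apply Finset.sum_congr _ (fun _ _ => rfl)
      ext h; simp
    have step3 : ∑ dd : D, ∑ h ∈ users dd, y h dd * (β dd + γ h dd)
        ≤ ∑ dd : D, p dd * x dd := by
      apply Finset.sum_le_sum
      intro dd _
      have e1 : ∑ h ∈ users dd, y h dd * (β dd + γ h dd)
          = (∑ h ∈ users dd, y h dd) * β dd + ∑ h ∈ users dd, y h dd * γ h dd := by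
        rw [Finset.sum_mul, ← Finset.sum_add_distrib]
        apply Finset.sum_congr rfl; intro h _; ring
      rw [e1]
      have b1 : (∑ h ∈ users dd, y h dd) * β dd ≤ ((k (center dd) : ℝ) * x dd) * β dd :=
        mul_le_mul_of_nonneg_right (h2 dd) (hβ dd)
      have b2 : ∑ h ∈ users dd, y h dd * γ h dd ≤ ∑ h ∈ users dd, x dd * γ h dd := by
        apply Finset.sum_le_sum; intro h hh
        exact mul_le_mul_of_nonneg_right (h3 dd h hh) (hγ h dd)
      calc (∑ h ∈ users dd, y h dd) * β dd + ∑ h ∈ users dd, y h dd * γ h dd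
          ≤ ((k (center dd) : ℝ) * x dd) * β dd + ∑ h ∈ users dd, x dd * γ h dd :=
            add_le_add b1 b2
        _ = x dd * ((k (center dd) : ℝ) * β dd + ∑ h ∈ users dd, γ h dd) := by
            simp only [mul_add, Finset.mul_sum]; ring_nf
        _ ≤ x dd * p dd := mul_le_mul_of_nonneg_left (hdual2 dd) (hx0 dd)
        _ = p dd * x dd := mul_comm _ _
    calc T ≤ _ := step1
      _ ≤ _ := step2
      _ = _ := swap
      _ ≤ _ := step3
  -- each chosen disk has power ≤ T
  have hperdisk : ∀ dd ∈ 𝒟hat, p dd ≤ T := by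
    intro dd hdd
    rw [hcharge dd hdd]
    exact Finset.sum_le_sum_of_subset_of_nonneg (Finset.subset_univ _)
      (fun h _ _ => hθ h)
  -- card 𝒟hat ≤ card S
  have hcard : (𝒟hat.card : ℝ) ≤ (Fintype.card S : ℝ) := by
    have : 𝒟hat.card ≤ Fintype.card S := by
      have : 𝒟hat.card = ∑ i : S, (𝒟hat.filter (fun dd => center dd = i)).card := by
        rw [← Finset.card_biUnion]
        · congr 1
          ext dd; simp
        · intro a _ b _ hab
          simp only [Finset.disjoint_left, Finset.mem_filter]
          rintro t ⟨_, rfl⟩ ⟨_, h⟩; exact hab h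
      rw [this]
      calc ∑ i : S, (𝒟hat.filter (fun dd => center dd = i)).card
          ≤ ∑ _i : S, 1 := Finset.sum_le_sum fun i _ => hone i
        _ = Fintype.card S := by simp
    exact_mod_cast this
  calc ∑ dd ∈ 𝒟hat, p dd ≤ ∑ _dd ∈ 𝒟hat, T := Finset.sum_le_sum hperdisk
    _ = (𝒟hat.card : ℝ) * T := by rw [Finset.sum_const, nsmul_eq_mul]
    _ ≤ (Fintype.card S : ℝ) * T := mul_le_mul_of_nonneg_right hcard hT0
    _ ≤ (Fintype.card S : ℝ) * ∑ dd : D, p dd * x dd :=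
        mul_le_mul_of_nonneg_left hwd (by positivity)
end
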